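/- Let 0 ≤ μ < L < ∞, let I be a finite index set, and let (x_i, g_i, f_i) for i ∈ I be triples with x_i, g_i ∈ ℝ^d and f_i ∈ ℝ. Then the set {(x_i, g_i, f_i)}_{i∈I} is F_{μ,L}-interpolable if and only if for every pair of indices i, j ∈ I: f_i − f_j − ⟨g_j, x_i − x_j⟩ ≥ (1/(2(1 − μ/L))) · ( (1/L)‖g_i − g_j‖² + μ‖x_i − x_j‖² − (2μ/L)⟨g_j − g_i, x_j − x_i⟩ ). -/

import Mathlib

open scoped RealInnerProductSpace

/-- `f : ℝ^d → ℝ` belongs to the class `F_{μ,L}` (for finite `L`): it is differentiable,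
its gradient is `L`-Lipschitz, and `f - (μ/2)‖·‖²` is convex. -/
def SmoothStronglyConvex {d : ℕ} (μ L : ℝ) (f : EuclideanSpace ℝ (Fin d) → ℝ) : Prop :=
  Differentiable ℝ f ∧
  (∀ x y, ‖gradient f x - gradient f y‖ ≤ L * ‖x - y‖) ∧
  ConvexOn ℝ Set.univ (fun x => f x - μ / 2 * ‖x‖ ^ 2)

/-- The set of triples `(x i, g i, f i)` is `F_{μ,L}`-interpolable. -/
def Interpolable {d : ℕ} {ι : Type*} (μ L : ℝ)
    (x g : ι → EuclideanSpace ℝ (Fin d)) (fv : ι → ℝ) : Prop :=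
  ∃ f : EuclideanSpace ℝ (Fin d) → ℝ, SmoothStronglyConvex μ L f ∧
    ∀ i, f (x i) = fv i ∧ gradient f (x i) = g i

section InterpAux

variable {E : Type*} [NormedAddCommGroup E] [InnerProductSpace ℝ E] [CompleteSpace E]
variable {ι : Type*} [Fintype ι]





/-- Young-type inequality from Cauchy-Schwarz. -/
lemma inner_le_quad {M : ℝ} (hM : 0 < M) (v h : E) :
    ⟪v, h⟫ ≤ M / 2 * ‖h‖ ^ 2 + ‖v‖ ^ 2 / (2 * M) := by
  have h1 := real_inner_le_norm v h
  rw [← sub_nonneg]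
  have e : M / 2 * ‖h‖ ^ 2 + ‖v‖ ^ 2 / (2 * M) - ⟪v, h⟫ =
      (M * ‖h‖ - ‖v‖) ^ 2 / (2 * M) + (‖v‖ * ‖h‖ - ⟪v, h⟫) := by
    field_simp; ring
  rw [e]
  have t1 : 0 ≤ (M * ‖h‖ - ‖v‖) ^ 2 / (2 * M) := by positivity
  linarith

/-- An affine function lies below a quadratic iff it does so at the critical point. -/
lemma quad_ge_affine {M : ℝ} (hM : 0 < M) (ca cb : ℝ) (a b p q : E)
    (h : cb + ⟪q, a - b⟫ + ‖p - q‖ ^ 2 / (2 * M) ≤ ca) (z : E) :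
    cb + ⟪q, z - b⟫ ≤ ca + ⟪p, z - a⟫ + M / 2 * ‖z - a‖ ^ 2 := by
  have h2 : ⟪q - p, z - a⟫ ≤ M / 2 * ‖z - a‖ ^ 2 + ‖q - p‖ ^ 2 / (2 * M) :=
    inner_le_quad hM _ _
  have e1 : ⟪q, z - b⟫ = ⟪q, z - a⟫ + ⟪q, a - b⟫ := by
    rw [← inner_add_right]; norm_num
  have e2 : ⟪q - p, z - a⟫ = ⟪q, z - a⟫ - ⟪p, z - a⟫ := inner_sub_left _ _ _
  have e3 : ‖q - p‖ = ‖p - q‖ := norm_sub_rev _ _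
  rw [e1]
  rw [e2, e3] at h2
  linarith

/-- A two-sided quadratic sandwich at a point gives the gradient there. -/
lemma hasGradientAt_of_sandwich {f : E → ℝ} {s x : E} {M : ℝ} (hM : 0 ≤ M)
    (hl : ∀ z, f x + ⟪s, z - x⟫ ≤ f z)
    (hu : ∀ z, f z ≤ f x + ⟪s, z - x⟫ + M / 2 * ‖z - x‖ ^ 2) :
    HasGradientAt f s x := by
  rw [hasGradientAt_iff_isLittleO, Asymptotics.isLittleO_iff]
  intro c hc
  rw [Metric.eventually_nhds_iff]
  refine ⟨2 * c / (M + 1), by positivity, fun {y} hy => ?_⟩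
  rw [dist_eq_norm] at hy
  have h1 := hl y
  have h2 := hu y
  have hn : 0 ≤ ‖y - x‖ := norm_nonneg _
  have key : |f y - f x - ⟪s, y - x⟫| ≤ M / 2 * ‖y - x‖ ^ 2 := by
    rw [abs_le]; constructor <;> nlinarith
  rw [Real.norm_eq_abs]
  calc |f y - f x - ⟪s, y - x⟫| ≤ M / 2 * ‖y - x‖ ^ 2 := key
    _ ≤ c * ‖y - x‖ := by
        have hy' : ‖y - x‖ * (M + 1) < 2 * c := by
          rwa [← lt_div_iff₀ (by positivity : (0:ℝ) < M + 1)]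
        nlinarith [mul_le_mul_of_nonneg_left hy'.le hn, sq_nonneg ‖y - x‖]

/-- Cocoercivity from a global subgradient lower bound and quadratic upper bound. -/
lemma coco_of_sandwich {f : E → ℝ} {s : E → E} {M : ℝ} (hM : 0 < M)
    (hl : ∀ x z, f x + ⟪s x, z - x⟫ ≤ f z)
    (hu : ∀ x z, f z ≤ f x + ⟪s x, z - x⟫ + M / 2 * ‖z - x‖ ^ 2)
    (x y : E) :
    f x + ⟪s x, y - x⟫ + ‖s y - s x‖ ^ 2 / (2 * M) ≤ f y := by
  set w : E := s x - s y with hw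
  set z : E := y + M⁻¹ • w with hz
  have h1 := hl x z
  have h2 := hu y z
  have e1 : z - x = (y - x) + M⁻¹ • w := by rw [hz]; abel
  have e2 : z - y = M⁻¹ • w := by rw [hz]; abel
  rw [e1, inner_add_right, real_inner_smul_right] at h1
  rw [e2, real_inner_smul_right] at h2
  have e3 : ‖M⁻¹ • w‖ ^ 2 = M⁻¹ ^ 2 * ‖w‖ ^ 2 := by
    rw [norm_smul, Real.norm_eq_abs, abs_of_pos (by positivity), mul_pow]
  rw [e3] at h2
  have e4 : ⟪s x, w⟫ - ⟪s y, w⟫ = ‖w‖ ^ 2 := by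
    rw [← inner_sub_left, ← hw, real_inner_self_eq_norm_sq]
  have e5 : ‖s y - s x‖ = ‖w‖ := by rw [hw, norm_sub_rev]
  rw [e5]
  have hM' : M ≠ 0 := ne_of_gt hM
  have key : M⁻¹ * ⟪s x, w⟫ - M⁻¹ * ⟪s y, w⟫ = M⁻¹ * ‖w‖ ^ 2 := by
    rw [← mul_sub, e4]
  have : M / 2 * (M⁻¹ ^ 2 * ‖w‖ ^ 2) = ‖w‖ ^ 2 / (2 * M) := by
    field_simp
  rw [this] at h2
  have goal' : M⁻¹ * ‖w‖ ^ 2 - ‖w‖ ^ 2 / (2 * M) = ‖w‖ ^ 2 / (2 * M) := by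
    field_simp; ring
  linarith

/-- Lipschitz gradient from cocoercivity. -/
lemma lip_of_sandwich {f : E → ℝ} {s : E → E} {M : ℝ} (hM : 0 < M)
    (hl : ∀ x z, f x + ⟪s x, z - x⟫ ≤ f z)
    (hu : ∀ x z, f z ≤ f x + ⟪s x, z - x⟫ + M / 2 * ‖z - x‖ ^ 2)
    (x y : E) : ‖s x - s y‖ ≤ M * ‖x - y‖ := by
  have h1 := coco_of_sandwich hM hl hu x y
  have h2 := coco_of_sandwich hM hl hu y x
  have e1 : ⟪s x, y - x⟫ + ⟪s y, x - y⟫ = -⟪s x - s y, x - y⟫ := by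
    have : y - x = -(x - y) := by abel
    rw [this, inner_neg_right, inner_sub_left]; ring
  have e2 : ‖s y - s x‖ = ‖s x - s y‖ := norm_sub_rev _ _
  have h3 : ‖s x - s y‖ ^ 2 / M ≤ ⟪s x - s y, x - y⟫ := by
    rw [e2] at h1
    have := add_le_add h1 h2
    have hd : ‖s x - s y‖ ^ 2 / (2 * M) + ‖s x - s y‖ ^ 2 / (2 * M) = ‖s x - s y‖ ^ 2 / M := by
      field_simp; ring
    nlinarith [this]
  have h4 : ⟪s x - s y, x - y⟫ ≤ ‖s x - s y‖ * ‖x - y‖ := real_inner_le_norm _ _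
  rcases eq_or_lt_of_le (norm_nonneg (s x - s y)) with h | h
  · rw [← h]; positivity
  · rw [div_le_iff₀ hM] at h3
    nlinarith

/-- Convexity from existence of subgradients. -/
lemma convexOn_of_subgradient {f : E → ℝ} {s : E → E}
    (hl : ∀ x z, f x + ⟪s x, z - x⟫ ≤ f z) :
    ConvexOn ℝ Set.univ f := by
  refine ⟨convex_univ, fun x _ y _ a b ha hb hab => ?_⟩
  set m : E := a • x + b • y with hm
  have h1 := hl m x
  have h2 := hl m y
  have key : a * ⟪s m, x - m⟫ + b * ⟪s m, y - m⟫ = 0 := by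
    rw [← real_inner_smul_right, ← real_inner_smul_right, ← inner_add_right]
    have e : a • (x - m) + b • (y - m) = m - (a + b) • m := by
      rw [hm]; module
    rw [e, hab, one_smul, sub_self, inner_zero_right]
  simp only [smul_eq_mul]
  have hfm : a * f m + b * f m = f m := by rw [← add_mul, hab, one_mul]
  nlinarith [mul_le_mul_of_nonneg_left h1 ha, mul_le_mul_of_nonneg_left h2 hb]




lemma line_hasDerivAt (x v : E) (t : ℝ) : HasDerivAt (fun t : ℝ => x + t • v) v t := by
  simpa using ((hasDerivAt_id t).smul_const v).const_add x

lemma comp_line_hasDerivAt {f : E → ℝ} (hd : Differentiable ℝ f) (x v : E) (t : ℝ) :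
    HasDerivAt (fun t : ℝ => f (x + t • v)) ⟪gradient f (x + t • v), v⟫ t := by
  have hf : HasFDerivAt f ((InnerProductSpace.toDual ℝ E) (gradient f (x + t • v))) (x + t • v) :=
    hasGradientAt_iff_hasFDerivAt.mp (hd _).hasGradientAt
  have := hf.comp_hasDerivAt t (line_hasDerivAt x v t)
  simpa [InnerProductSpace.toDual_apply_apply, Function.comp_def] using this

/-- Descent lemma: a function with `L`-Lipschitz gradient has quadratic upper bounds. -/
lemma descent_lemma {f : E → ℝ} (hd : Differentiable ℝ f) {L : ℝ} (hL : 0 ≤ L)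
    (hlip : ∀ x y, ‖gradient f x - gradient f y‖ ≤ L * ‖x - y‖) (x y : E) :
    f y ≤ f x + ⟪gradient f x, y - x⟫ + L / 2 * ‖y - x‖ ^ 2 := by
  set v : E := y - x with hv
  have hGcont : Continuous (gradient f) := by
    have : LipschitzWith (Real.toNNReal L) (gradient f) := by
      apply LipschitzWith.of_dist_le_mul
      intro a b
      rw [dist_eq_norm, dist_eq_norm, Real.coe_toNNReal L hL]
      exact hlip a b
    exact this.continuous
  have hline : Continuous (fun t : ℝ => x + t • v) := by continuity
  have hcont : Continuous (fun t : ℝ => (⟪gradient f (x + t • v), v⟫ : ℝ)) :=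
    (hGcont.comp hline).inner continuous_const
  have hftc : f y - f x = ∫ t in (0:ℝ)..1, ⟪gradient f (x + t • v), v⟫ := by
    have h0 := intervalIntegral.integral_eq_sub_of_hasDerivAt
      (f := fun t : ℝ => f (x + t • v))
      (fun t _ => comp_line_hasDerivAt hd x v t) (hcont.intervalIntegrable 0 1)
    simp only [one_smul, zero_smul, add_zero] at h0
    have hxy : x + v = y := by rw [hv]; abel
    rw [hxy] at h0
    exact h0.symm
  have hbound : ∀ t ∈ Set.Icc (0:ℝ) 1,
      (⟪gradient f (x + t • v), v⟫ : ℝ) ≤ ⟪gradient f x, v⟫ + L * ‖v‖ ^ 2 * t := by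
    intro t ht
    have h1 : (⟪gradient f (x + t • v), v⟫ : ℝ) - ⟪gradient f x, v⟫
        = ⟪gradient f (x + t • v) - gradient f x, v⟫ := by rw [inner_sub_left]
    have h2 : (⟪gradient f (x + t • v) - gradient f x, v⟫ : ℝ)
        ≤ ‖gradient f (x + t • v) - gradient f x‖ * ‖v‖ := real_inner_le_norm _ _
    have h3 : ‖gradient f (x + t • v) - gradient f x‖ ≤ L * (t * ‖v‖) := by
      have := hlip (x + t • v) x
      simpa [norm_smul, abs_of_nonneg ht.1] using this
    nlinarith [norm_nonneg v, mul_le_mul_of_nonneg_right h3 (norm_nonneg v)]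
  have hint : (∫ t in (0:ℝ)..1, (⟪gradient f (x + t • v), v⟫ : ℝ))
      ≤ ∫ t in (0:ℝ)..1, (⟪gradient f x, v⟫ + L * ‖v‖ ^ 2 * t) := by
    apply intervalIntegral.integral_mono_on (by norm_num) (hcont.intervalIntegrable 0 1)
    · have hi2 : IntervalIntegrable (fun t : ℝ => ⟪gradient f x, v⟫ + L * ‖v‖ ^ 2 * t)
          MeasureTheory.volume 0 1 := by
        apply Continuous.intervalIntegrable; continuity
      exact hi2
    · exact hbound
  have hrhs : (∫ t in (0:ℝ)..1, (⟪gradient f x, v⟫ + L * ‖v‖ ^ 2 * t))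
      = ⟪gradient f x, v⟫ + L / 2 * ‖v‖ ^ 2 := by
    have hi2 : IntervalIntegrable (fun t : ℝ => L * ‖v‖ ^ 2 * t) MeasureTheory.volume 0 1 := by
      apply Continuous.intervalIntegrable; continuity
    rw [intervalIntegral.integral_add (intervalIntegrable_const) hi2,
      intervalIntegral.integral_const_mul, integral_id]
    simp
    ring
  linarith [hftc, hint, hrhs.le, hrhs.ge]

/-- First-order lower bound for a `μ`-strongly convex differentiable function. -/
lemma strong_convex_lower {f : E → ℝ} (hd : Differentiable ℝ f) {μ : ℝ}
    (hconv : ConvexOn ℝ Set.univ (fun z => f z - μ / 2 * ‖z‖ ^ 2)) (x z : E) :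
    f x + ⟪gradient f x, z - x⟫ + μ / 2 * ‖z - x‖ ^ 2 ≤ f z := by
  set v : E := z - x with hv
  set h : E → ℝ := fun w => f w - μ / 2 * ‖w‖ ^ 2 with hh
  set ψ : ℝ → ℝ := fun t => h (x + t • v) with hψ
  have hψconv : ConvexOn ℝ Set.univ ψ := by
    have hA : ψ = h ∘ (AffineMap.lineMap x z) := by
      funext t
      simp only [hψ, Function.comp_apply, AffineMap.lineMap_apply_module']
      rw [hv]
      congr 1
      abel
    rw [hA]
    have := hconv.comp_affineMap (AffineMap.lineMap x z)
    simpa using this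
  have hnorm : ∀ t : ℝ, HasDerivAt (fun t : ℝ => ‖x + t • v‖ ^ 2)
      (2 * ⟪x + t • v, v⟫) t := by
    intro t
    have h1 := (line_hasDerivAt x v t).inner ℝ (line_hasDerivAt x v t)
    have h2 : (⟪x + t • v, v⟫ : ℝ) + ⟪v, x + t • v⟫ = 2 * ⟪x + t • v, v⟫ := by
      rw [real_inner_comm v]; ring
    rw [h2] at h1
    have h3 : (fun t : ℝ => (⟪x + t • v, x + t • v⟫ : ℝ)) = fun t : ℝ => ‖x + t • v‖ ^ 2 := by
      funext t; rw [real_inner_self_eq_norm_sq]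
    rwa [h3] at h1
  have hψderiv : HasDerivAt ψ (⟪gradient f x, v⟫ - μ * ⟪x, v⟫) 0 := by
    have h1 := comp_line_hasDerivAt hd x v 0
    have h2 := ((hnorm 0).const_mul (μ / 2))
    have h3 := h1.sub h2
    simp only [zero_smul, add_zero] at h3
    rw [show ⟪gradient f x, v⟫ - μ * ⟪x, v⟫ = ⟪gradient f x, v⟫ - μ / 2 * (2 * ⟪x, v⟫) by ring]
    exact h3
  have hslope := hψconv.le_slope_of_hasDerivAt (Set.mem_univ (0:ℝ)) (Set.mem_univ (1:ℝ))
    (by norm_num) hψderiv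
  rw [slope_def_field] at hslope
  have e0 : ψ 0 = f x - μ / 2 * ‖x‖ ^ 2 := by simp [hψ, hh]
  have e1 : ψ 1 = f z - μ / 2 * ‖z‖ ^ 2 := by
    simp only [hψ, hh, one_smul, hv]
    have : x + (z - x) = z := by abel
    rw [this]
  have hns : ‖v‖ ^ 2 = ‖z‖ ^ 2 - 2 * ⟪z, x⟫ + ‖x‖ ^ 2 := by
    rw [hv]; exact norm_sub_sq_real z x
  have hxv : (⟪x, v⟫ : ℝ) = ⟪x, z⟫ - ‖x‖ ^ 2 := by
    rw [hv, inner_sub_right, real_inner_self_eq_norm_sq]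
  have hcomm : (⟪z, x⟫ : ℝ) = ⟪x, z⟫ := real_inner_comm x z
  rw [e0, e1] at hslope
  norm_num at hslope
  have hxv' : μ * ⟪x, v⟫ = μ * ⟪x, z⟫ - μ * ‖x‖ ^ 2 := by rw [hxv]; ring
  have hns' : μ / 2 * ‖v‖ ^ 2 = μ / 2 * ‖z‖ ^ 2 - μ * ⟪x, z⟫ + μ / 2 * ‖x‖ ^ 2 := by
    rw [hns, hcomm]; ring
  have hg : ⟪gradient f x, v⟫ = fderiv ℝ f x v := by simp [gradient]
  linarith [hslope, hxv', hns', hg]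




lemma nonneg_linear_coeff {a b : ℝ} (ha : 0 ≤ a)
    (h : ∀ t : ℝ, 0 < t → t ≤ 1 → 0 ≤ b * t + a * t ^ 2) : 0 ≤ b := by
  by_contra hb
  push_neg at hb
  have h2a : (0:ℝ) < 2 * a + 1 := by linarith
  set t := min 1 (-b / (2 * a + 1)) with ht
  have htpos : 0 < t := lt_min one_pos (div_pos (neg_pos.mpr hb) h2a)
  have ht1 : t ≤ 1 := min_le_left _ _
  have ht2 : t ≤ -b / (2 * a + 1) := min_le_right _ _
  have hkey := h t htpos ht1
  have hat : a * t ≤ -b / 2 := by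
    have h3 : t * (2 * a + 1) ≤ -b := by
      rw [← le_div_iff₀ h2a] at *; exact ht2
    nlinarith
  nlinarith [mul_le_mul_of_nonneg_left hat htpos.le, mul_pos htpos (neg_pos.mpr hb)]

/-- Weighted sum of points. -/
def wsum (x : ι → E) (α : ι → ℝ) : E := ∑ i, α i • x i

/-- The auxiliary point of the partially minimized quadratic. -/
noncomputable def uu (M : ℝ) (x g : ι → E) (α : ι → ℝ) (z : E) : E :=
  z - wsum x α + M⁻¹ • wsum g α

/-- Adjusted function values. -/
noncomputable def cc (M : ℝ) (g : ι → E) (fv : ι → ℝ) (i : ι) : ℝ := fv i - ‖g i‖ ^ 2 / (2 * M)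

/-- The partially minimized convex-hull function, for a fixed weight vector. -/
noncomputable def Fq (M : ℝ) (x g : ι → E) (fv : ι → ℝ) (α : ι → ℝ) (z : E) : ℝ :=
  (∑ i, α i * cc M g fv i) + M / 2 * ‖uu M x g α z‖ ^ 2

open Classical in
/-- Vertex weight vectors. -/
noncomputable def ee (i : ι) : ι → ℝ := fun j => if j = i then 1 else 0

open Classical in
lemma ee_apply_self (i : ι) : ee i i = 1 := by simp [ee]

open Classical in
lemma ee_apply_ne {i j : ι} (h : j ≠ i) : ee i j = 0 := by simp [ee, h]

lemma ee_mem_stdSimplex (i : ι) : ee i ∈ stdSimplex ℝ ι := by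
  classical
  constructor
  · intro j
    rcases eq_or_ne j i with h | h
    · rw [h, ee_apply_self]; norm_num
    · rw [ee_apply_ne h]
  · rw [Finset.sum_eq_single i]
    · exact ee_apply_self i
    · intro j _ hj; exact ee_apply_ne hj
    · intro hi; exact absurd (Finset.mem_univ i) hi

lemma wsum_single (x : ι → E) (i : ι) : wsum x (ee i) = x i := by
  classical
  unfold wsum
  rw [Finset.sum_eq_single i]
  · rw [ee_apply_self, one_smul]
  · intro j _ hj; rw [ee_apply_ne hj, zero_smul]
  · intro hi; exact absurd (Finset.mem_univ i) hi

lemma sum_single_mul (c : ι → ℝ) (i : ι) : ∑ j, ee i j * c j = c i := by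
  classical
  rw [Finset.sum_eq_single i]
  · rw [ee_apply_self, one_mul]
  · intro j _ hj; rw [ee_apply_ne hj, zero_mul]
  · intro hi; exact absurd (Finset.mem_univ i) hi

lemma wsum_combo (x : ι → E) (α β : ι → ℝ) (t : ℝ) :
    wsum x ((1 - t) • α + t • β) = (1 - t) • wsum x α + t • wsum x β := by
  unfold wsum
  rw [Finset.smul_sum, Finset.smul_sum, ← Finset.sum_add_distrib]
  refine Finset.sum_congr rfl fun i _ => ?_
  simp only [Pi.add_apply, Pi.smul_apply, smul_eq_mul]
  rw [add_smul, mul_smul, mul_smul]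

lemma uu_combo (M : ℝ) (x g : ι → E) (α β : ι → ℝ) (t : ℝ) (z : E) :
    uu M x g ((1 - t) • α + t • β) z = uu M x g α z + t • (uu M x g β z - uu M x g α z) := by
  unfold uu
  rw [wsum_combo, wsum_combo]
  module

lemma sum_cc_combo (c : ι → ℝ) (α β : ι → ℝ) (t : ℝ) :
    ∑ j, ((1 - t) • α + t • β) j * c j
      = (1 - t) * (∑ j, α j * c j) + t * (∑ j, β j * c j) := by
  rw [Finset.mul_sum, Finset.mul_sum, ← Finset.sum_add_distrib]
  refine Finset.sum_congr rfl fun i _ => ?_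
  simp only [Pi.add_apply, Pi.smul_apply, smul_eq_mul]
  ring

/-- Second-order Taylor identity of `Fq` in `z`. -/
lemma Fq_taylor (M : ℝ) (x g : ι → E) (fv : ι → ℝ) (α : ι → ℝ) (z w : E) :
    Fq M x g fv α w
      = Fq M x g fv α z + ⟪M • uu M x g α z, w - z⟫ + M / 2 * ‖w - z‖ ^ 2 := by
  have hu : uu M x g α w = uu M x g α z + (w - z) := by unfold uu; abel
  unfold Fq
  rw [hu, norm_add_sq_real, real_inner_smul_left]
  ring

/-- Per-term identity: value of the `i`-th quadratic at the associated lifted point. -/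
lemma per_term (M : ℝ) (hM : 0 < M) (x g : ι → E) (fv : ι → ℝ) (α : ι → ℝ) (z : E) (i : ι) :
    fv i + ⟪g i, (x i + uu M x g α z - M⁻¹ • g i) - x i⟫
        + M / 2 * ‖(x i + uu M x g α z - M⁻¹ • g i) - x i‖ ^ 2
      = cc M g fv i + M / 2 * ‖uu M x g α z‖ ^ 2 := by
  have e : (x i + uu M x g α z - M⁻¹ • g i) - x i = uu M x g α z - M⁻¹ • g i := by abel
  rw [e, norm_sub_sq_real, inner_sub_right, real_inner_smul_right, real_inner_smul_right,
    norm_smul, Real.norm_eq_abs, abs_of_pos (by positivity : (0:ℝ) < M⁻¹)]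
  rw [real_inner_self_eq_norm_sq, real_inner_comm (uu M x g α z) (g i)]
  unfold cc
  field_simp
  ring

/-- Any global affine minorant of all the quadratics is a minorant of `Fq`. -/
lemma key_lower {M : ℝ} (hM : 0 < M) (x g : ι → E) (fv : ι → ℝ)
    (cb : ℝ) (b q : E) (hq : ∀ i, cb + ⟪q, x i - b⟫ + ‖g i - q‖ ^ 2 / (2 * M) ≤ fv i)
    {α : ι → ℝ} (hα : α ∈ stdSimplex ℝ ι) (z : E) :
    cb + ⟪q, z - b⟫ ≤ Fq M x g fv α z := by
  have hα1 : ∑ i, α i = 1 := hα.2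
  have hper : ∀ i, cb + ⟪q, (x i + uu M x g α z - M⁻¹ • g i) - b⟫
      ≤ cc M g fv i + M / 2 * ‖uu M x g α z‖ ^ 2 := fun i =>
    le_trans (quad_ge_affine hM (fv i) cb (x i) b (g i) q (hq i) _)
      (le_of_eq (per_term M hM x g fv α z i))
  have hsum := Finset.sum_le_sum (fun i (_ : i ∈ Finset.univ) =>
    mul_le_mul_of_nonneg_left (hper i) (hα.1 i))
  -- the lifted points average back to `z`
  have hwz : ∑ i, α i • (x i + uu M x g α z - M⁻¹ • g i) = z := by
    have e : ∀ i, α i • (x i + uu M x g α z - M⁻¹ • g i)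
        = α i • x i + α i • uu M x g α z - M⁻¹ • (α i • g i) := by
      intro i; rw [smul_sub, smul_add, smul_comm]
    simp only [e]
    rw [Finset.sum_sub_distrib, Finset.sum_add_distrib, ← Finset.sum_smul, hα1, one_smul,
      ← Finset.smul_sum]
    show wsum x α + uu M x g α z - M⁻¹ • wsum g α = z
    unfold uu
    abel
  have hleft : ∑ i, α i * (cb + ⟪q, (x i + uu M x g α z - M⁻¹ • g i) - b⟫)
      = cb + ⟪q, z - b⟫ := by
    simp only [mul_add]
    rw [Finset.sum_add_distrib, ← Finset.sum_mul, hα1, one_mul]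
    congr 1
    have e : ∀ i, α i * ⟪q, (x i + uu M x g α z - M⁻¹ • g i) - b⟫
        = ⟪q, α i • ((x i + uu M x g α z - M⁻¹ • g i) - b)⟫ := by
      intro i; rw [real_inner_smul_right]
    simp only [e]
    rw [← inner_sum]
    congr 1
    have e2 : ∑ i, α i • ((x i + uu M x g α z - M⁻¹ • g i) - b)
        = (∑ i, α i • (x i + uu M x g α z - M⁻¹ • g i)) - (∑ i, α i) • b := by
      rw [Finset.sum_smul, ← Finset.sum_sub_distrib]
      exact Finset.sum_congr rfl fun i _ => smul_sub _ _ _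
    rw [e2, hwz, hα1, one_smul]
  have hright : ∑ i, α i * (cc M g fv i + M / 2 * ‖uu M x g α z‖ ^ 2)
      = Fq M x g fv α z := by
    simp only [mul_add]
    rw [Finset.sum_add_distrib, ← Finset.sum_mul, hα1, one_mul]
    rfl
  rw [hleft, hright] at hsum
  exact hsum

/-- Existence of an `M`-smooth convex interpolant with prescribed sandwich structure. -/
lemma exists_interp {M : ℝ} (hM : 0 < M) (x g : ι → E) (fv : ι → ℝ)
    (hpair : ∀ i j, fv j + ⟪g j, x i - x j⟫ + ‖g i - g j‖ ^ 2 / (2 * M) ≤ fv i) :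
    ∃ (h : E → ℝ) (s : E → E),
      (∀ z w, h z + ⟪s z, w - z⟫ ≤ h w) ∧
      (∀ z w, h w ≤ h z + ⟪s z, w - z⟫ + M / 2 * ‖w - z‖ ^ 2) ∧
      (∀ i, h (x i) = fv i) ∧
      (∀ i w, fv i + ⟪g i, w - x i⟫ ≤ h w) ∧
      (∀ i w, h w ≤ fv i + ⟪g i, w - x i⟫ + M / 2 * ‖w - x i‖ ^ 2) := by
  rcases isEmpty_or_nonempty ι with hemp | hne
  · refine ⟨fun _ => 0, fun _ => 0, fun z w => ?_, fun z w => ?_,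
      fun i => (IsEmpty.false i).elim, fun i => (IsEmpty.false i).elim,
      fun i => (IsEmpty.false i).elim⟩
    · simp
    · simp; positivity
  -- nonempty case
  have hcont : ∀ z : E, Continuous fun α : ι → ℝ => Fq M x g fv α z := by
    intro z
    apply Continuous.add
    · exact continuous_finset_sum _ fun i _ => (continuous_apply i).mul continuous_const
    · apply continuous_const.mul
      apply Continuous.pow
      apply Continuous.norm
      unfold uu wsum
      exact (continuous_const.sub
          (continuous_finset_sum _ fun i _ => (continuous_apply i).smul continuous_const)).add
        ((continuous_finset_sum _ fun i _ => (continuous_apply i).smul continuous_const).const_smul _)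
  obtain ⟨i0⟩ := hne
  have hΔne : (stdSimplex ℝ ι).Nonempty := ⟨ee i0, ee_mem_stdSimplex i0⟩
  have hmin : ∀ z : E, ∃ α ∈ stdSimplex ℝ ι, ∀ β ∈ stdSimplex ℝ ι,
      Fq M x g fv α z ≤ Fq M x g fv β z := by
    intro z
    obtain ⟨α, hαΔ, hα⟩ := (isCompact_stdSimplex ℝ ι).exists_isMinOn hΔne
      ((hcont z).continuousOn)
    exact ⟨α, hαΔ, fun β hβ => hα hβ⟩
  choose αm hαmΔ hαmin using hmin
  -- the KKT / optimality condition at each point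
  have hKKT : ∀ (z : E) (i : ι),
      Fq M x g fv (αm z) z + ⟪M • uu M x g (αm z) z, x i - z⟫
        + ‖g i - M • uu M x g (αm z) z‖ ^ 2 / (2 * M) ≤ fv i := by
    intro z i
    have hb0 : 0 ≤ (cc M g fv i - ∑ j, αm z j * cc M g fv j)
        + M * ⟪uu M x g (αm z) z, uu M x g (ee i) z - uu M x g (αm z) z⟫ := by
      refine nonneg_linear_coeff
        (a := M / 2 * ‖uu M x g (ee i) z - uu M x g (αm z) z‖ ^ 2) (by positivity) ?_
      intro t ht0 ht1
      have hmem : (1 - t) • αm z + t • ee i ∈ stdSimplex ℝ ι :=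
        (convex_stdSimplex ℝ ι) (hαmΔ z) (ee_mem_stdSimplex i) (by linarith) ht0.le (by ring)
      have hle := hαmin z _ hmem
      have hexp : Fq M x g fv ((1 - t) • αm z + t • ee i) z
          = Fq M x g fv (αm z) z
            + ((cc M g fv i - ∑ j, αm z j * cc M g fv j)
                + M * ⟪uu M x g (αm z) z, uu M x g (ee i) z - uu M x g (αm z) z⟫) * t
            + (M / 2 * ‖uu M x g (ee i) z - uu M x g (αm z) z‖ ^ 2) * t ^ 2 := by
        unfold Fq
        rw [sum_cc_combo, uu_combo, sum_single_mul, norm_add_sq_real, real_inner_smul_right,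
          norm_smul, Real.norm_eq_abs, mul_pow, sq_abs]
        ring
      rw [hexp] at hle
      linarith [hle]
    -- unfold the optimality condition into the required inequality
    have euei : uu M x g (ee i) z = z - x i + M⁻¹ • g i := by
      unfold uu; rw [wsum_single, wsum_single]
    have e3 : ⟪uu M x g (αm z) z, uu M x g (ee i) z - uu M x g (αm z) z⟫
        = ⟪uu M x g (αm z) z, z⟫ - ⟪uu M x g (αm z) z, x i⟫
          + M⁻¹ * ⟪uu M x g (αm z) z, g i⟫ - ‖uu M x g (αm z) z‖ ^ 2 := by
      rw [euei, inner_sub_right, inner_add_right, inner_sub_right, real_inner_smul_right,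
        real_inner_self_eq_norm_sq]
    have e1 : ⟪M • uu M x g (αm z) z, x i - z⟫
        = M * ⟪uu M x g (αm z) z, x i⟫ - M * ⟪uu M x g (αm z) z, z⟫ := by
      rw [real_inner_smul_left, inner_sub_right]; ring
    have e2 : ‖g i - M • uu M x g (αm z) z‖ ^ 2
        = ‖g i‖ ^ 2 - 2 * (M * ⟪uu M x g (αm z) z, g i⟫) + M ^ 2 * ‖uu M x g (αm z) z‖ ^ 2 := by
      rw [norm_sub_sq_real, real_inner_smul_right, norm_smul, Real.norm_eq_abs,
        abs_of_pos hM, mul_pow, real_inner_comm]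
    have egoal : Fq M x g fv (αm z) z + ⟪M • uu M x g (αm z) z, x i - z⟫
          + ‖g i - M • uu M x g (αm z) z‖ ^ 2 / (2 * M)
        = fv i - ((cc M g fv i - ∑ j, αm z j * cc M g fv j)
            + M * ⟪uu M x g (αm z) z, uu M x g (ee i) z - uu M x g (αm z) z⟫) := by
      rw [e1, e2, e3]
      unfold Fq cc
      field_simp
      rw [Finset.sum_congr rfl fun j _ => show αm z j * (fv j * 2 * M - ‖g j‖ ^ 2) / (2 * M)
        = αm z j * (2 * M * fv j - ‖g j‖ ^ 2) / (2 * M) by ring]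
      ring
    rw [egoal]
    linarith [hb0]
  -- package the function and its slopes
  refine ⟨fun z => Fq M x g fv (αm z) z, fun z => M • uu M x g (αm z) z,
    ?_, ?_, ?_, ?_, ?_⟩
  · -- global lower bound
    intro z w
    exact key_lower hM x g fv _ z _ (hKKT z) (hαmΔ w) w
  · -- global upper bound
    intro z w
    calc Fq M x g fv (αm w) w ≤ Fq M x g fv (αm z) w := hαmin w _ (hαmΔ z)
      _ = Fq M x g fv (αm z) z + ⟪M • uu M x g (αm z) z, w - z⟫ + M / 2 * ‖w - z‖ ^ 2 :=
        Fq_taylor M x g fv _ z w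
  · -- interpolation of function values
    intro i
    have huei : ∀ w : E, uu M x g (ee i) w = w - x i + M⁻¹ • g i := by
      intro w; unfold uu; rw [wsum_single, wsum_single]
    have hFei : Fq M x g fv (ee i) (x i) = fv i := by
      unfold Fq
      rw [sum_single_mul, huei]
      have : x i - x i + M⁻¹ • g i = M⁻¹ • g i := by abel
      rw [this, norm_smul, Real.norm_eq_abs, abs_of_pos (by positivity : (0:ℝ) < M⁻¹)]
      unfold cc
      field_simp
      ring
    refine le_antisymm ?_ ?_
    · calc Fq M x g fv (αm (x i)) (x i) ≤ Fq M x g fv (ee i) (x i) :=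
          hαmin _ _ (ee_mem_stdSimplex i)
        _ = fv i := hFei
    · have := key_lower hM x g fv (fv i) (x i) (g i)
        (fun j => hpair j i) (hαmΔ (x i)) (x i)
      simpa using this
  · -- lower bound at the data points
    intro i w
    have := key_lower hM x g fv (fv i) (x i) (g i)
      (fun j => hpair j i) (hαmΔ w) w
    exact this
  · -- upper bound at the data points
    intro i w
    have huei : ∀ w : E, uu M x g (ee i) w = w - x i + M⁻¹ • g i := by
      intro w; unfold uu; rw [wsum_single, wsum_single]
    have hFei : Fq M x g fv (ee i) (x i) = fv i := by
      unfold Fq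
      rw [sum_single_mul, huei]
      have : x i - x i + M⁻¹ • g i = M⁻¹ • g i := by abel
      rw [this, norm_smul, Real.norm_eq_abs, abs_of_pos (by positivity : (0:ℝ) < M⁻¹)]
      unfold cc
      field_simp
      ring
    have hgi : M • uu M x g (ee i) (x i) = g i := by
      rw [huei]
      have : x i - x i + M⁻¹ • g i = M⁻¹ • g i := by abel
      rw [this, smul_smul, mul_inv_cancel₀ (ne_of_gt hM), one_smul]
    calc Fq M x g fv (αm w) w ≤ Fq M x g fv (ee i) w := hαmin w _ (ee_mem_stdSimplex i)
      _ = Fq M x g fv (ee i) (x i) + ⟪M • uu M x g (ee i) (x i), w - x i⟫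
          + M / 2 * ‖w - x i‖ ^ 2 := Fq_taylor M x g fv _ _ w
      _ = fv i + ⟪g i, w - x i⟫ + M / 2 * ‖w - x i‖ ^ 2 := by rw [hFei, hgi]




/-- Equivalence between the `(μ, L)` interpolation inequality and the shifted
`(0, L - μ)` cocoercivity inequality. -/
lemma pair_iff {μ L : ℝ} (hμ : 0 ≤ μ) (hμL : μ < L) (xi xj gi gj : E) (fi fj : ℝ) :
    (fi - fj - ⟪gj, xi - xj⟫ ≥ 1 / (2 * (1 - μ / L)) *
        (1 / L * ‖gi - gj‖ ^ 2 + μ * ‖xi - xj‖ ^ 2 - 2 * (μ / L) * ⟪gj - gi, xj - xi⟫)) ↔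
    ((fj - μ / 2 * ‖xj‖ ^ 2) + ⟪gj - μ • xj, xi - xj⟫
        + ‖(gi - μ • xi) - (gj - μ • xj)‖ ^ 2 / (2 * (L - μ)) ≤ fi - μ / 2 * ‖xi‖ ^ 2) := by
  have hL : 0 < L := lt_of_le_of_lt hμ hμL
  have hM : 0 < L - μ := by linarith
  have hL' : L ≠ 0 := ne_of_gt hL
  have hM' : L - μ ≠ 0 := ne_of_gt hM
  have f1 : ⟪gj - gi, xj - xi⟫ = ⟪gi - gj, xi - xj⟫ := by
    rw [← neg_sub gi gj, ← neg_sub xi xj, inner_neg_neg]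
  have f2 : ⟪gj - μ • xj, xi - xj⟫ = ⟪gj, xi - xj⟫ - μ * ⟪xj, xi - xj⟫ := by
    rw [inner_sub_left, real_inner_smul_left]
  have f3 : (gi - μ • xi) - (gj - μ • xj) = (gi - gj) - μ • (xi - xj) := by module
  have f4 : ‖(gi - gj) - μ • (xi - xj)‖ ^ 2
      = ‖gi - gj‖ ^ 2 - 2 * (μ * ⟪gi - gj, xi - xj⟫) + μ ^ 2 * ‖xi - xj‖ ^ 2 := by
    rw [norm_sub_sq_real, real_inner_smul_right, norm_smul, Real.norm_eq_abs, mul_pow, sq_abs]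
  have f5 : μ / 2 * ‖xi‖ ^ 2 - μ / 2 * ‖xj‖ ^ 2 - μ * ⟪xj, xi - xj⟫ = μ / 2 * ‖xi - xj‖ ^ 2 := by
    have en : ‖xi - xj‖ ^ 2 = ‖xi‖ ^ 2 - 2 * ⟪xi, xj⟫ + ‖xj‖ ^ 2 := norm_sub_sq_real xi xj
    have ei : ⟪xj, xi - xj⟫ = ⟪xi, xj⟫ - ‖xj‖ ^ 2 := by
      rw [inner_sub_right, real_inner_self_eq_norm_sq, real_inner_comm]
    rw [en, ei]; ring
  have hd : (0:ℝ) < 1 - μ / L := by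
    rw [sub_pos, div_lt_one hL]; exact hμL
  have f6 : 1 / (2 * (1 - μ / L)) *
        (1 / L * ‖gi - gj‖ ^ 2 + μ * ‖xi - xj‖ ^ 2 - 2 * (μ / L) * ⟪gi - gj, xi - xj⟫)
      = (‖gi - gj‖ ^ 2 - 2 * (μ * ⟪gi - gj, xi - xj⟫) + μ ^ 2 * ‖xi - xj‖ ^ 2) / (2 * (L - μ))
        + μ / 2 * ‖xi - xj‖ ^ 2 := by
    have hd' : (1:ℝ) - μ / L ≠ 0 := ne_of_gt hd
    field_simp
    ring
  rw [f1, f3, f4, f2, f6]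
  constructor <;> intro hz <;> linarith [f5]


end InterpAux

/-- Theorem 4 of the paper (`F_{μ,L}`-interpolability, finite `L`):
`{(x_i, g_i, f_i)}` is `F_{μ,L}`-interpolable iff the interpolation inequalities
hold for every pair of indices. -/
theorem interpolable_iff {d : ℕ} {ι : Type*} [Fintype ι]
    (μ L : ℝ) (hμ : 0 ≤ μ) (hμL : μ < L)
    (x g : ι → EuclideanSpace ℝ (Fin d)) (fv : ι → ℝ) :
    Interpolable μ L x g fv ↔
      ∀ i j, fv i - fv j - ⟪g j, x i - x j⟫ ≥
        1 / (2 * (1 - μ / L)) *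
          (1 / L * ‖g i - g j‖ ^ 2 + μ * ‖x i - x j‖ ^ 2
            - 2 * (μ / L) * ⟪g j - g i, x j - x i⟫) := by
  have hL : 0 < L := lt_of_le_of_lt hμ hμL
  have hM : 0 < L - μ := by linarith
  constructor
  · rintro ⟨f, ⟨hdiff, hlip, hconv⟩, hinterp⟩ i j
    rw [pair_iff hμ hμL]
    have hlow := strong_convex_lower hdiff hconv
    have hup := descent_lemma hdiff hL.le hlip
    have hnid : ∀ a z : EuclideanSpace ℝ (Fin d),
        μ / 2 * ‖z - a‖ ^ 2 = μ / 2 * ‖z‖ ^ 2 - μ * ⟪a, z - a⟫ - μ / 2 * ‖a‖ ^ 2 := by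
      intro a z
      have en : ‖z - a‖ ^ 2 = ‖z‖ ^ 2 - 2 * ⟪z, a⟫ + ‖a‖ ^ 2 := norm_sub_sq_real z a
      have ei : ⟪a, z - a⟫ = ⟪z, a⟫ - ‖a‖ ^ 2 := by
        rw [inner_sub_right, real_inner_self_eq_norm_sq, real_inner_comm]
      rw [en, ei]; ring
    have hlh : ∀ a z : EuclideanSpace ℝ (Fin d),
        (fun w => f w - μ / 2 * ‖w‖ ^ 2) a
            + ⟪(fun w => gradient f w - μ • w) a, z - a⟫
          ≤ (fun w => f w - μ / 2 * ‖w‖ ^ 2) z := by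
      intro a z
      simp only
      have e1 : ⟪gradient f a - μ • a, z - a⟫
          = ⟪gradient f a, z - a⟫ - μ * ⟪a, z - a⟫ := by
        rw [inner_sub_left, real_inner_smul_left]
      linarith [hlow a z, hnid a z, e1.le, e1.ge]
    have huh : ∀ a z : EuclideanSpace ℝ (Fin d),
        (fun w => f w - μ / 2 * ‖w‖ ^ 2) z
          ≤ (fun w => f w - μ / 2 * ‖w‖ ^ 2) a
            + ⟪(fun w => gradient f w - μ • w) a, z - a⟫
            + (L - μ) / 2 * ‖z - a‖ ^ 2 := by
      intro a z
      simp only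
      have e1 : ⟪gradient f a - μ • a, z - a⟫
          = ⟪gradient f a, z - a⟫ - μ * ⟪a, z - a⟫ := by
        rw [inner_sub_left, real_inner_smul_left]
      have hLsplit : (L - μ) / 2 * ‖z - a‖ ^ 2
          = L / 2 * ‖z - a‖ ^ 2 - μ / 2 * ‖z - a‖ ^ 2 := by ring
      linarith [hup a z, hnid a z, e1.le, e1.ge, hLsplit.le, hLsplit.ge]
    have key := coco_of_sandwich hM hlh huh (x j) (x i)
    rw [(hinterp i).1, (hinterp j).1, (hinterp i).2, (hinterp j).2] at key
    exact key
  · intro hineq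
    have hpair' : ∀ i j, (fv j - μ / 2 * ‖x j‖ ^ 2)
        + ⟪g j - μ • x j, x i - x j⟫
        + ‖(g i - μ • x i) - (g j - μ • x j)‖ ^ 2 / (2 * (L - μ))
          ≤ fv i - μ / 2 * ‖x i‖ ^ 2 :=
      fun i j => (pair_iff hμ hμL _ _ _ _ _ _).mp (hineq i j)
    obtain ⟨h, s, hl, hu, hdata, hdatal, hdatau⟩ :=
      exists_interp hM x (fun i => g i - μ • x i) (fun i => fv i - μ / 2 * ‖x i‖ ^ 2) hpair'
    set f : EuclideanSpace ℝ (Fin d) → ℝ := fun z => h z + μ / 2 * ‖z‖ ^ 2 with hf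
    have hnid : ∀ a z : EuclideanSpace ℝ (Fin d),
        μ / 2 * ‖z - a‖ ^ 2 = μ / 2 * ‖z‖ ^ 2 - μ * ⟪a, z - a⟫ - μ / 2 * ‖a‖ ^ 2 := by
      intro a z
      have en : ‖z - a‖ ^ 2 = ‖z‖ ^ 2 - 2 * ⟪z, a⟫ + ‖a‖ ^ 2 := norm_sub_sq_real z a
      have ei : ⟪a, z - a⟫ = ⟪z, a⟫ - ‖a‖ ^ 2 := by
        rw [inner_sub_right, real_inner_self_eq_norm_sq, real_inner_comm]
      rw [en, ei]; ring
    have flow : ∀ a w : EuclideanSpace ℝ (Fin d), f a + ⟪s a + μ • a, w - a⟫ ≤ f w := by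
      intro a w
      have e1 : ⟪s a + μ • a, w - a⟫ = ⟪s a, w - a⟫ + μ * ⟪a, w - a⟫ := by
        rw [inner_add_left, real_inner_smul_left]
      have h0 : (0:ℝ) ≤ μ / 2 * ‖w - a‖ ^ 2 := by positivity
      simp only [hf]
      linarith [hl a w, hnid a w, e1.le, e1.ge]
    have fup : ∀ a w : EuclideanSpace ℝ (Fin d),
        f w ≤ f a + ⟪s a + μ • a, w - a⟫ + L / 2 * ‖w - a‖ ^ 2 := by
      intro a w
      have e1 : ⟪s a + μ • a, w - a⟫ = ⟪s a, w - a⟫ + μ * ⟪a, w - a⟫ := by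
        rw [inner_add_left, real_inner_smul_left]
      have hLsplit : L / 2 * ‖w - a‖ ^ 2
          = (L - μ) / 2 * ‖w - a‖ ^ 2 + μ / 2 * ‖w - a‖ ^ 2 := by ring
      simp only [hf]
      linarith [hu a w, hnid a w, e1.le, e1.ge, hLsplit.le, hLsplit.ge]
    have hfxi : ∀ i, f (x i) = fv i := by
      intro i
      simp only [hf]
      rw [hdata i]
      ring
    have fdatal : ∀ i (w : EuclideanSpace ℝ (Fin d)), fv i + ⟪g i, w - x i⟫ ≤ f w := by
      intro i w
      have e1 : ⟪g i, w - x i⟫ = ⟪g i - μ • x i, w - x i⟫ + μ * ⟪x i, w - x i⟫ := by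
        rw [inner_sub_left, real_inner_smul_left]; ring
      have h0 : (0:ℝ) ≤ μ / 2 * ‖w - x i‖ ^ 2 := by positivity
      simp only [hf]
      linarith [hdatal i w, hnid (x i) w, e1.le, e1.ge]
    have fdatau : ∀ i (w : EuclideanSpace ℝ (Fin d)),
        f w ≤ fv i + ⟪g i, w - x i⟫ + L / 2 * ‖w - x i‖ ^ 2 := by
      intro i w
      have e1 : ⟪g i, w - x i⟫ = ⟪g i - μ • x i, w - x i⟫ + μ * ⟪x i, w - x i⟫ := by
        rw [inner_sub_left, real_inner_smul_left]; ring
      have hLsplit : L / 2 * ‖w - x i‖ ^ 2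
          = (L - μ) / 2 * ‖w - x i‖ ^ 2 + μ / 2 * ‖w - x i‖ ^ 2 := by ring
      simp only [hf]
      linarith [hdatau i w, hnid (x i) w, e1.le, e1.ge, hLsplit.le, hLsplit.ge]
    have hgrads : ∀ z, HasGradientAt f (s z + μ • z) z := fun z =>
      hasGradientAt_of_sandwich hL.le (flow z) (fup z)
    have hgradi : ∀ i, HasGradientAt f (g i) (x i) := fun i =>
      hasGradientAt_of_sandwich hL.le
        (fun w => by rw [hfxi i]; exact fdatal i w)
        (fun w => by rw [hfxi i]; exact fdatau i w)
    refine ⟨f, ⟨fun z => (hgrads z).differentiableAt, ?_, ?_⟩,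
      fun i => ⟨hfxi i, (hgradi i).gradient⟩⟩
    · intro a b
      rw [(hgrads a).gradient, (hgrads b).gradient]
      exact lip_of_sandwich hL flow fup a b
    · have hfh : (fun z => f z - μ / 2 * ‖z‖ ^ 2) = h := by
        funext z
        simp only [hf]
        ring
      rw [hfh]
      exact convexOn_of_subgradient hl
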